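/- (Noiseless coding bound.) Let D ≥ 2 be an integer, let p₁, …, pₙ ≥ 0 with ∑ᵢ pᵢ = 1, and let k₁, …, kₙ be positive integers satisfying the Kraft inequality ∑ᵢ D^{−kᵢ} ≤ 1 (as holds for the word-lengths of any prefix-free code over an alphabet of size D). Then the expected code length dominates the entropy: (∑ᵢ pᵢ·kᵢ)·log D ≥ −∑_{i : pᵢ > 0} pᵢ·log pᵢ, where log is the natural logarithm. -/

import Mathlib

/-- **Noiseless coding bound.**
Let `D ≥ 2`, let `p : Fin n → ℝ` be a probability vector, and let `k i` be positive
integers satisfying the Kraft inequality `∑ i, D^(-k i) ≤ 1` (as for the word-lengths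
of any prefix-free code over an alphabet of size `D`).  Then the expected code length
dominates the entropy: `(∑ i, p i * k i) * log D ≥ -∑_{i : 0 < p i} p i * log (p i)`,
with `log` the natural logarithm. -/
theorem noiseless_coding_bound (D : ℕ) (hD : 2 ≤ D) (n : ℕ)
    (p : Fin n → ℝ) (k : Fin n → ℕ)
    (hp : ∀ i, 0 ≤ p i) (hpsum : ∑ i, p i = 1)
    (hk : ∀ i, 0 < k i)
    (hkraft : ∑ i, ((D : ℝ) ^ (k i))⁻¹ ≤ 1) :
    -∑ i ∈ Finset.univ.filter (fun i => 0 < p i), p i * Real.log (p i) ≤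
      (∑ i, p i * (k i : ℝ)) * Real.log D := by
  set S := Finset.univ.filter (fun i => 0 < p i) with hS
  have hDpos : (0:ℝ) < D := by
    have : (2:ℝ) ≤ D := by exact_mod_cast hD
    linarith
  set q : Fin n → ℝ := fun i => ((D : ℝ) ^ (k i))⁻¹ with hqdef
  have hq : ∀ i, 0 < q i := fun i => by positivity
  -- zero terms outside S
  have hzero : ∀ i, i ∉ S → p i = 0 := by
    intro i hi
    have h1 : ¬ 0 < p i := by simpa [hS] using hi
    linarith [hp i, not_lt.mp h1]
  -- sum of p over S is 1
  have hpS : ∑ i ∈ S, p i = 1 := by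
    rw [← hpsum]
    exact Finset.sum_subset (Finset.filter_subset _ _) (fun i _ hi => hzero i hi)
  -- sum of q over S is ≤ 1
  have hqS : ∑ i ∈ S, q i ≤ 1 := by
    refine le_trans ?_ hkraft
    exact Finset.sum_le_sum_of_subset_of_nonneg (Finset.filter_subset _ _)
      (fun i _ _ => (hq i).le)
  -- pointwise Gibbs inequality
  have key : ∀ i ∈ S, p i * Real.log (q i) - p i * Real.log (p i) ≤ q i - p i := by
    intro i hi
    have hpi : 0 < p i := by
      have := Finset.mem_filter.mp hi
      exact this.2
    have hlog := Real.log_le_sub_one_of_pos (div_pos (hq i) hpi)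
    rw [Real.log_div (hq i).ne' hpi.ne'] at hlog
    have h2 := mul_le_mul_of_nonneg_left hlog hpi.le
    have h3 : p i * (q i / p i - 1) = q i - p i := by
      field_simp
    calc p i * Real.log (q i) - p i * Real.log (p i)
        = p i * (Real.log (q i) - Real.log (p i)) := by ring
      _ ≤ p i * (q i / p i - 1) := h2
      _ = q i - p i := h3
  have hsum : ∑ i ∈ S, (p i * Real.log (q i) - p i * Real.log (p i)) ≤ 0 := by
    calc ∑ i ∈ S, (p i * Real.log (q i) - p i * Real.log (p i))
        ≤ ∑ i ∈ S, (q i - p i) := Finset.sum_le_sum key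
      _ = (∑ i ∈ S, q i) - ∑ i ∈ S, p i := Finset.sum_sub_distrib _ _
      _ ≤ 1 - 1 := by rw [hpS]; linarith
      _ = 0 := by ring
  rw [Finset.sum_sub_distrib] at hsum
  -- rewrite log q
  have hlogq : ∀ i, Real.log (q i) = -((k i : ℝ) * Real.log D) := by
    intro i
    rw [hqdef]
    simp [Real.log_inv, Real.log_pow]
  have hleft : ∑ i ∈ S, p i * Real.log (q i)
      = -((∑ i, p i * (k i : ℝ)) * Real.log D) := by
    have : ∑ i ∈ S, p i * Real.log (q i) = ∑ i ∈ S, -(p i * (k i : ℝ) * Real.log D) := by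
      refine Finset.sum_congr rfl fun i _ => ?_
      rw [hlogq i]; ring
    rw [this, Finset.sum_neg_distrib]
    have hext : ∑ i ∈ S, p i * (k i : ℝ) * Real.log D
        = ∑ i, p i * (k i : ℝ) * Real.log D := by
      refine Finset.sum_subset (Finset.filter_subset _ _) fun i _ hi => ?_
      rw [hzero i hi]; ring
    rw [hext, ← Finset.sum_mul]
  rw [hleft] at hsum
  linarith
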